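/- Let K⋆ satisfy R K⋆ = Bᵀ S11 (A − BK⋆) with S11, R symmetric, and suppose ρ(A − BK⋆) < 1 and ρ(A − LC) < 1. If S12 satisfies S12 = −(K⋆)ᵀRK⋆ + (A−BK⋆)ᵀ S11 B K⋆ + (A−BK⋆)ᵀ S12 (A−LC), then S12 = 0. -/

import Mathlib

open Matrix

/-- Spectral radius of a real square matrix: supremum of the moduli of the
complex eigenvalues (roots of the characteristic polynomial of the complexification). -/
noncomputable def specRad {ι : Type} [Fintype ι] [DecidableEq ι] (M : Matrix ι ι ℝ) : ℝ :=
  sSup {r : ℝ | ∃ μ : ℂ, (M.map (Complex.ofReal ·)).charpoly.IsRoot μ ∧ r = ‖μ‖}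

section Aux

open Polynomial Filter

attribute [local instance] Matrix.linftyOpNormedAddCommGroup Matrix.linftyOpNormedRing
  Matrix.linftyOpNormedAlgebra

lemma aux_isRoot_of_mem_spectrum {n : ℕ} {N : Matrix (Fin n) (Fin n) ℂ} {z : ℂ}
    (hz : z ∈ spectrum ℂ N) : N.charpoly.IsRoot z := by
  rw [spectrum.mem_iff, Matrix.isUnit_iff_isUnit_det] at hz
  have hdet : (algebraMap ℂ (Matrix (Fin n) (Fin n) ℂ) z - N).det = 0 := by
    simpa [isUnit_iff_ne_zero] using hz
  have key : N.charpoly.eval z = (algebraMap ℂ (Matrix (Fin n) (Fin n) ℂ) z - N).det := by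
    rw [Matrix.charpoly, ← Polynomial.coe_evalRingHom, RingHom.map_det]
    congr 1
    ext i j
    rcases eq_or_ne i j with rfl | hij
    · simp [charmatrix_apply_eq, Matrix.algebraMap_matrix_apply]
    · simp [charmatrix_apply_ne _ _ _ hij, Matrix.algebraMap_matrix_apply, hij]
  simpa [Polynomial.IsRoot, key] using hdet

lemma aux_charpoly_transpose {n : ℕ} {R : Type*} [CommRing R] (M : Matrix (Fin n) (Fin n) R) :
    Mᵀ.charpoly = M.charpoly := by
  have h : charmatrix Mᵀ = (charmatrix M)ᵀ := by
    ext i j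
    rcases eq_or_ne i j with rfl | hij
    · simp [charmatrix_apply_eq]
    · simp [charmatrix_apply_ne _ _ _ hij, charmatrix_apply_ne _ _ _ (Ne.symm hij)]
  rw [Matrix.charpoly, h, Matrix.det_transpose, Matrix.charpoly]

lemma aux_root_le {ι : Type} [Fintype ι] [DecidableEq ι] (M : Matrix ι ι ℝ) {μ : ℂ}
    (h : (M.map (Complex.ofReal ·)).charpoly.IsRoot μ) : ‖μ‖ ≤ specRad M := by
  refine le_csSup ?_ ⟨μ, h, rfl⟩
  have hfin : Set.Finite {μ : ℂ | (M.map (Complex.ofReal ·)).charpoly.IsRoot μ} :=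
    Polynomial.finite_setOf_isRoot (Matrix.charpoly_monic _).ne_zero
  have : {r : ℝ | ∃ μ : ℂ, (M.map (Complex.ofReal ·)).charpoly.IsRoot μ ∧ r = ‖μ‖}
      = (‖·‖) '' {μ : ℂ | (M.map (Complex.ofReal ·)).charpoly.IsRoot μ} := by
    ext r; simp [eq_comm, Set.mem_image]
  rw [this]
  exact (hfin.image _).bddAbove

lemma aux_specRad_transpose {n : ℕ} (M : Matrix (Fin n) (Fin n) ℝ) :
    specRad Mᵀ = specRad M := by
  unfold specRad
  congr 1
  have : (Mᵀ.map (Complex.ofReal ·)).charpoly = (M.map (Complex.ofReal ·)).charpoly := by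
    rw [Matrix.transpose_map, aux_charpoly_transpose]
  rw [this]

lemma aux_spectralRadius_lt_one {n : ℕ} (M : Matrix (Fin n) (Fin n) ℝ) (h : specRad M < 1) :
    spectralRadius ℂ (M.map (Complex.ofReal ·)) < 1 := by
  set c : NNReal := (specRad M).toNNReal with hcdef
  have hc : (c : ENNReal) < 1 := by
    rw [ENNReal.coe_lt_one_iff, hcdef]
    exact Real.toNNReal_lt_one.mpr h
  refine lt_of_le_of_lt ?_ hc
  rw [spectralRadius]
  refine iSup₂_le fun z hz => ?_
  have hr := aux_isRoot_of_mem_spectrum hz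
  have hle := aux_root_le M hr
  rw [ENNReal.coe_le_coe]
  have hzn : ‖z‖ ≤ specRad M := by simpa using hle
  have h0 : (0 : ℝ) ≤ specRad M := le_trans (norm_nonneg z) hzn
  exact (Real.le_toNNReal_iff_coe_le h0).mpr hzn

lemma aux_exists_pow {n : ℕ} (M N : Matrix (Fin n) (Fin n) ℂ)
    (hM : spectralRadius ℂ M < 1) (hN : spectralRadius ℂ N < 1) :
    ∃ k : ℕ, ‖M ^ k‖₊ * ‖N ^ k‖₊ < 1 := by
  have hsup : max (spectralRadius ℂ M) (spectralRadius ℂ N) < 1 := max_lt hM hN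
  obtain ⟨c, hc1, hc2⟩ := ENNReal.lt_iff_exists_nnreal_btwn.mp hsup
  have hc1M : spectralRadius ℂ M < c := lt_of_le_of_lt (le_max_left _ _) hc1
  have hc1N : spectralRadius ℂ N < c := lt_of_le_of_lt (le_max_right _ _) hc1
  have hMt := spectrum.pow_nnnorm_pow_one_div_tendsto_nhds_spectralRadius M
  have hNt := spectrum.pow_nnnorm_pow_one_div_tendsto_nhds_spectralRadius N
  have evM : ∀ᶠ k : ℕ in atTop, (‖M ^ k‖₊ : ENNReal) ^ (1 / (k : ℝ)) < (c : ENNReal) :=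
    hMt.eventually_lt_const hc1M
  have evN : ∀ᶠ k : ℕ in atTop, (‖N ^ k‖₊ : ENNReal) ^ (1 / (k : ℝ)) < (c : ENNReal) :=
    hNt.eventually_lt_const hc1N
  obtain ⟨k, hk1, hkM, hkN⟩ := ((eventually_ge_atTop 1).and (evM.and evN)).exists
  have hkne : (k : ℝ) ≠ 0 := by positivity
  have key : ∀ (P : Matrix (Fin n) (Fin n) ℂ),
      (‖P ^ k‖₊ : ENNReal) ^ (1 / (k : ℝ)) < (c : ENNReal) → ‖P ^ k‖₊ ≤ c := by
    intro P hP
    have h1 : (‖P ^ k‖₊ : ENNReal) = ((‖P ^ k‖₊ : ENNReal) ^ (1 / (k : ℝ))) ^ (k : ℝ) := by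
      rw [← ENNReal.rpow_mul, one_div, inv_mul_cancel₀ hkne, ENNReal.rpow_one]
    have h2 : (‖P ^ k‖₊ : ENNReal) ≤ (c : ENNReal) ^ (k : ℝ) := by
      rw [h1]
      exact ENNReal.rpow_le_rpow hP.le (by positivity)
    have h3 : (c : ENNReal) ^ (k : ℝ) ≤ (c : ENNReal) ^ (1 : ℝ) :=
      ENNReal.rpow_le_rpow_of_exponent_ge hc2.le (by exact_mod_cast hk1)
    rw [ENNReal.rpow_one] at h3
    exact_mod_cast h2.trans h3
  have hc2' : c < 1 := by exact_mod_cast hc2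
  refine ⟨k, ?_⟩
  calc ‖M ^ k‖₊ * ‖N ^ k‖₊ ≤ c * c := mul_le_mul' (key M hkM) (key N hkN)
  _ ≤ 1 * c := mul_le_mul_left hc2'.le c
  _ < 1 := by rw [one_mul]; exact hc2'

lemma aux_sylvester {n : ℕ} {M N X : Matrix (Fin n) (Fin n) ℝ}
    (hM : specRad M < 1) (hN : specRad N < 1) (hX : X = Mᵀ * X * N) : X = 0 := by
  set f : ℝ →+* ℂ := Complex.ofRealHom with hf
  set M' := Mᵀ.map f with hM'
  set N' := N.map f with hN'
  set X' := X.map f with hX'def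
  have hX' : X' = M' * X' * N' := by
    conv_lhs => rw [hX'def, hX, Matrix.map_mul, Matrix.map_mul]
  have iter : ∀ k : ℕ, X' = M' ^ k * X' * N' ^ k := by
    intro k
    induction k with
    | zero => simp
    | succ k ih =>
      calc X' = M' * X' * N' := hX'
      _ = M' * (M' ^ k * X' * N' ^ k) * N' := by rw [← ih]
      _ = M' ^ (k + 1) * X' * N' ^ (k + 1) := by
          rw [pow_succ', pow_succ]; simp [mul_assoc]
  have hMt : spectralRadius ℂ M' < 1 := by
    have h1 : specRad Mᵀ < 1 := by rw [aux_specRad_transpose]; exact hM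
    have := aux_spectralRadius_lt_one Mᵀ h1
    convert this using 2
    rfl
  have hNt : spectralRadius ℂ N' < 1 := by
    have := aux_spectralRadius_lt_one N hN
    convert this using 2
    rfl
  obtain ⟨k, hk⟩ := aux_exists_pow M' N' hMt hNt
  by_contra hne
  have hX'ne : X' ≠ 0 := by
    intro h0
    apply hne
    ext i j
    have := congrFun (congrFun h0 i) j
    simpa [hX'def, hf] using this
  have hpos : 0 < ‖X'‖₊ := nnnorm_pos.mpr hX'ne
  have hle : ‖X'‖₊ ≤ ‖M' ^ k‖₊ * ‖X'‖₊ * ‖N' ^ k‖₊ := by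
    calc ‖X'‖₊ = ‖M' ^ k * X' * N' ^ k‖₊ := by rw [← iter k]
    _ ≤ ‖M' ^ k * X'‖₊ * ‖N' ^ k‖₊ := nnnorm_mul_le _ _
    _ ≤ ‖M' ^ k‖₊ * ‖X'‖₊ * ‖N' ^ k‖₊ := mul_le_mul_left (nnnorm_mul_le _ _) _
  have hlt : ‖M' ^ k‖₊ * ‖X'‖₊ * ‖N' ^ k‖₊ < ‖X'‖₊ := by
    have : ‖M' ^ k‖₊ * ‖X'‖₊ * ‖N' ^ k‖₊ = (‖M' ^ k‖₊ * ‖N' ^ k‖₊) * ‖X'‖₊ := by ring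
    rw [this]
    calc (‖M' ^ k‖₊ * ‖N' ^ k‖₊) * ‖X'‖₊ < 1 * ‖X'‖₊ := mul_lt_mul_of_pos_right hk hpos
    _ = ‖X'‖₊ := one_mul _
  exact absurd (hle.trans_lt hlt) (lt_irrefl _)

end Aux

theorem stmt_10 {n m d : ℕ}
    (A : Matrix (Fin n) (Fin n) ℝ) (B : Matrix (Fin n) (Fin m) ℝ)
    (C : Matrix (Fin d) (Fin n) ℝ) (Kstar : Matrix (Fin m) (Fin n) ℝ)
    (L : Matrix (Fin n) (Fin d) ℝ)
    (S11 S12 : Matrix (Fin n) (Fin n) ℝ) (R : Matrix (Fin m) (Fin m) ℝ)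
    (hS11 : S11ᵀ = S11) (hR : Rᵀ = R)
    (hopt : R * Kstar = Bᵀ * S11 * (A - B * Kstar))
    (hρK : specRad (A - B * Kstar) < 1) (hρL : specRad (A - L * C) < 1)
    (hS12 : S12 = -(Kstarᵀ * R * Kstar) + (A - B * Kstar)ᵀ * S11 * (B * Kstar) +
              (A - B * Kstar)ᵀ * S12 * (A - L * C)) :
    S12 = 0 := by
  have h1 : Kstarᵀ * R * Kstar = (A - B * Kstar)ᵀ * S11 * (B * Kstar) := by
    have ht := congrArg Matrix.transpose hopt
    simp only [Matrix.transpose_mul, Matrix.transpose_transpose, hR, hS11] at ht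
    -- ht : Kstarᵀ * R = (A - B * Kstar)ᵀ * (S11 * B)? need care
    calc Kstarᵀ * R * Kstar = ((A - B * Kstar)ᵀ * (S11 * B)) * Kstar := by rw [ht]
    _ = (A - B * Kstar)ᵀ * S11 * (B * Kstar) := by
        simp [Matrix.mul_assoc]
  rw [h1, neg_add_cancel, zero_add] at hS12
  exact aux_sylvester hρK hρL hS12
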